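/- Lemma 2.2 (viii): assume in addition that E has dimension 4 and that the trace of F is 0. Let e₁ ∈ E be a unit vector with ⟪e₁, ν⟫ = 0 and ⟪e₁, ξ⟫ = 0, and set e₂ := χ e₁. Then ⟪f e₁, e₂⟫ = 0 and ⟪f e₁, e₁⟫ = ⟪f e₂, e₂⟫ = -h. -/

import Mathlib

open RealInnerProductSpace

theorem lemma22_viii
  {E : Type*} [NormedAddCommGroup E] [InnerProductSpace ℝ E]
  (F : E →ₗ[ℝ] E)
  (hFsym : ∀ X Y : E, ⟪F X, Y⟫ = ⟪X, F Y⟫)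
  (hFinv : ∀ X : E, F (F X) = X)
  (ν : E) (hν : ‖ν‖ = 1)
  (h : ℝ) (hh : h = ⟪F ν, ν⟫)
  (V : E) (hV : V = F ν - h • ν)
  (f : E → E) (hf : ∀ X : E, f X = F X - ⟪X, V⟫ • ν)
  (J : E →ₗ[ℝ] E)
  (hJ2 : ∀ X : E, J (J X) = -X)
  (hJorth : ∀ X Y : E, ⟪J X, J Y⟫ = ⟪X, Y⟫)
  (hJF : ∀ X : E, J (F X) = F (J X))
  (ξ : E) (hξ : ξ = -(J ν))
  (η : E → ℝ) (hη : ∀ X : E, η X = ⟪ξ, X⟫)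
  (χ : E → E) (hχ : ∀ X : E, χ X = J X - η X • ν)
  [FiniteDimensional ℝ E] (hdim : Module.finrank ℝ E = 4)
  (htr : LinearMap.trace ℝ E F = 0)
  (e₁ : E) (he₁ : ‖e₁‖ = 1) (he₁ν : ⟪e₁, ν⟫ = 0) (he₁ξ : ⟪e₁, ξ⟫ = 0)
  (e₂ : E) (he₂ : e₂ = χ e₁)
    : ⟪f e₁, e₂⟫ = 0 ∧ ⟪f e₁, e₁⟫ = -h ∧ ⟪f e₂, e₂⟫ = -h := by
  -- J is skew-adjoint
  have hJskew : ∀ X Y : E, ⟪J X, Y⟫ = -⟪X, J Y⟫ := by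
    intro X Y
    have := hJorth X (J Y)
    rw [hJ2, inner_neg_right] at this
    linarith
  -- e₂ = J e₁
  have hη1 : η e₁ = 0 := by rw [hη]; rw [real_inner_comm]; exact he₁ξ
  have he2 : e₂ = J e₁ := by rw [he₂, hχ, hη1]; simp
  -- inner products among ν ξ e₁ e₂
  have hνν : ⟪ν, ν⟫ = (1:ℝ) := by
    rw [real_inner_self_eq_norm_sq, hν]; norm_num
  have he₁e₁ : ⟪e₁, e₁⟫ = (1:ℝ) := by
    rw [real_inner_self_eq_norm_sq, he₁]; norm_num
  have hξξ : ⟪ξ, ξ⟫ = (1:ℝ) := by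
    rw [hξ, inner_neg_neg, hJorth]; exact hνν
  have he₂e₂ : ⟪e₂, e₂⟫ = (1:ℝ) := by
    rw [he2, hJorth]; exact he₁e₁
  have hJνν : ⟪J ν, ν⟫ = 0 := by
    have h1 := hJskew ν ν
    have h2 := real_inner_comm ν (J ν)
    linarith
  have hνξ : ⟪ν, ξ⟫ = 0 := by
    rw [hξ, inner_neg_right, real_inner_comm, hJνν, neg_zero]
  have hνe₁ : ⟪ν, e₁⟫ = 0 := by rw [real_inner_comm]; exact he₁ν
  have hξe₁ : ⟪ξ, e₁⟫ = 0 := by rw [real_inner_comm]; exact he₁ξ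
  have hJνe₁ : ⟪J ν, e₁⟫ = 0 := by
    have := hξe₁
    rw [hξ, inner_neg_left] at this
    linarith
  have hνe₂ : ⟪ν, e₂⟫ = 0 := by
    rw [he2]
    have := hJskew ν e₁
    linarith
  have hξe₂ : ⟪ξ, e₂⟫ = 0 := by
    rw [he2, hξ, inner_neg_left, hJorth, hνe₁, neg_zero]
  have he₁e₂ : ⟪e₁, e₂⟫ = 0 := by
    rw [he2]
    have := hJskew e₁ e₁
    have h2 : ⟪e₁, J e₁⟫ = -⟪e₁, J e₁⟫ := by
      nth_rewrite 1 [real_inner_comm]; rw [this]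
    linarith
  -- orthonormal family
  set b : Fin 4 → E := ![ν, ξ, e₁, e₂] with hb
  have horth : Orthonormal ℝ b := by
    rw [orthonormal_iff_ite]
    intro i j
    have s1 : ⟪ξ, ν⟫ = 0 := by rw [real_inner_comm]; exact hνξ
    have s2 : ⟪e₂, ν⟫ = 0 := by rw [real_inner_comm]; exact hνe₂
    have s3 : ⟪e₂, ξ⟫ = 0 := by rw [real_inner_comm]; exact hξe₂
    have s4 : ⟪e₂, e₁⟫ = 0 := by rw [real_inner_comm]; exact he₁e₂
    have hξn : ‖ξ‖ = 1 := by
      have := hξξ; rw [real_inner_self_eq_norm_sq] at this; nlinarith [norm_nonneg ξ]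
    have he₂n : ‖e₂‖ = 1 := by
      have := he₂e₂; rw [real_inner_self_eq_norm_sq] at this; nlinarith [norm_nonneg e₂]
    fin_cases i <;> fin_cases j <;>
      simp [b, hνν, hξξ, he₁e₁, he₂e₂, hνξ, hνe₁, hνe₂, hξe₁, hξe₂, he₁e₂,
        he₁ν, he₁ξ, s1, s2, s3, s4, hν, he₁, hξn, he₂n]
  have hcard : Fintype.card (Fin 4) = Module.finrank ℝ E := by simp [hdim]
  let B : Module.Basis (Fin 4) ℝ E := basisOfOrthonormalOfCardEqFinrank horth hcard
  have hBcoe : ⇑B = b := coe_basisOfOrthonormalOfCardEqFinrank horth hcard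
  have horthB : Orthonormal ℝ (⇑B) := by rw [hBcoe]; exact horth
  -- repr via inner products
  have hrepr : ∀ (x : E) (i : Fin 4), B.repr x i = ⟪B i, x⟫ := by
    intro x i
    have h1 := (B.toOrthonormalBasis horthB).repr_apply_apply x i
    rw [B.coe_toOrthonormalBasis horthB] at h1
    rw [← h1]
    rfl
  -- trace formula
  have htrace : LinearMap.trace ℝ E F = ∑ i, ⟪b i, F (b i)⟫ := by
    rw [LinearMap.trace_eq_matrix_trace ℝ B F, Matrix.trace]
    congr 1
    funext i
    rw [Matrix.diag_apply, LinearMap.toMatrix_apply, hrepr, hBcoe]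
  -- key F inner products
  have hFξξ : ⟪F ξ, ξ⟫ = h := by
    rw [hξ, map_neg, inner_neg_neg, ← hJF, hJorth, hh]
  have hFee : ⟪F e₂, e₂⟫ = ⟪F e₁, e₁⟫ := by
    rw [he2, ← hJF, hJorth]
  have hFe₁e₂ : ⟪F e₁, e₂⟫ = 0 := by
    rw [he2]
    have h1 : ⟪F (J e₁), e₁⟫ = ⟪F e₁, J e₁⟫ := by rw [hFsym, real_inner_comm]
    have h2 : ⟪F (J e₁), e₁⟫ = -⟪F e₁, J e₁⟫ := by rw [← hJF]; exact hJskew (F e₁) e₁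
    linarith
  -- trace computation
  have hsum := htrace
  rw [htr, Fin.sum_univ_four] at hsum
  simp only [hb, Matrix.cons_val_zero, Matrix.cons_val_one, Matrix.head_cons,
    Matrix.cons_val_two, Matrix.tail_cons, Matrix.cons_val_three, Matrix.head_fin_const] at hsum
  have t1 : ⟪ν, F ν⟫ = h := by rw [← hFsym]; exact hh.symm
  have t2 : ⟪ξ, F ξ⟫ = h := by rw [← hFsym]; exact hFξξ
  have t3 : ⟪e₂, F e₂⟫ = ⟪F e₁, e₁⟫ := by rw [← hFsym]; exact hFee
  have t4 : ⟪e₁, F e₁⟫ = ⟪F e₁, e₁⟫ := (hFsym e₁ e₁).symm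
  have hA : ⟪F e₁, e₁⟫ = -h := by linarith
  -- f values
  have hf1 : ∀ Y : E, ⟪Y, ν⟫ = 0 → ∀ X : E, ⟪f X, Y⟫ = ⟪F X, Y⟫ := by
    intro Y hY X
    have hY' : ⟪ν, Y⟫ = 0 := by rw [real_inner_comm]; exact hY
    rw [hf, inner_sub_left, real_inner_smul_left, hY']
    ring
  have hν2 : ⟪e₂, ν⟫ = 0 := by rw [real_inner_comm]; exact hνe₂
  refine ⟨?_, ?_, ?_⟩
  · rw [hf1 e₂ hν2 e₁]
    · exact hFe₁e₂
  · rw [hf1 e₁ he₁ν e₁]; exact hA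
  · rw [hf1 e₂ hν2 e₂, hFee]; exact hA
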